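/- Let I = {0,1,…,m} be a finite discrete interval, let L_I ⊆ ℝ^{|I|} denote the set of all log-concave sequences indexed by I, let v_1,…,v_d ∈ ℝ^{|I|} and a_1,…,a_d ∈ ℝ, and let P_d(a,v) = {p ∈ [0,∞)^{|I|} : ⟨p, v_i⟩ = a_i for i = 1,…,d}. Assume P_d(a,v) is bounded and L_I ∩ P_d(a,v) is nonempty. Then for every convex continuous functional Φ : ℝ^{|I|} → ℝ, the supremum of Φ over L_I ∩ P_d(a,v) is attained at some sequence p ∈ L_I ∩ P_d(a,v) having at most d degrees of freedom (i.e., p does not have d+1 degrees of freedom). -/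

import Mathlib

/-- A sequence `p : {0,…,m} → ℝ` of nonnegative reals is log-concave if its support is a
discrete interval and `p n ^ 2 ≥ p (n+1) * p (n-1)` for all interior indices `n`. -/
def IsLogConcaveSeq {m : ℕ} (p : Fin (m + 1) → ℝ) : Prop :=
  (∀ n, 0 ≤ p n) ∧
  (∀ i j k : Fin (m + 1), i ≤ j → j ≤ k → 0 < p i → 0 < p k → 0 < p j) ∧
  ∀ n : ℕ, ∀ _h1 : 1 ≤ n, ∀ _h2 : n + 1 ≤ m,
    p ⟨n + 1, by omega⟩ * p ⟨n - 1, by omega⟩ ≤ p ⟨n, by omega⟩ ^ 2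

/-- A log-concave sequence `p` has `d` degrees of freedom if there exist linearly independent
sequences `q 1, …, q d`, each supported in the support of `p`, and `ε > 0`, such that for
all `δ i ∈ (-ε, ε)` the perturbed sequence `p + ∑ i, δ i • q i` is log-concave. -/
def HasDegreesOfFreedom {m : ℕ} (p : Fin (m + 1) → ℝ) (d : ℕ) : Prop :=
  ∃ (q : Fin d → Fin (m + 1) → ℝ) (ε : ℝ), 0 < ε ∧ LinearIndependent ℝ q ∧
    (∀ i n, q i n ≠ 0 → p n ≠ 0) ∧
    ∀ δ : Fin d → ℝ, (∀ i, |δ i| < ε) →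
      IsLogConcaveSeq (fun n => p n + ∑ i, δ i * q i n)

/-- The polytope `P_d(a, v) = {p ∈ [0,∞)^{|I|} : ⟨p, v i⟩ = a i, i = 1,…,d}`. -/
def polytopeP (m d : ℕ) (v : Fin d → Fin (m + 1) → ℝ) (a : Fin d → ℝ) :
    Set (Fin (m + 1) → ℝ) :=
  {p | (∀ n, 0 ≤ p n) ∧ ∀ i, ∑ n, p n * v i n = a i}


/-- On an interval where a log-concave sequence is positive, once it starts
decreasing it keeps decreasing. -/
lemma logconcave_dec {m : ℕ} (f : ℕ → ℝ)
    (hlc : ∀ n, 1 ≤ n → n + 1 ≤ m → f (n + 1) * f (n - 1) ≤ f n ^ 2)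
    {i k : ℕ} (hk : k ≤ m) (hpos : ∀ l, i ≤ l → l ≤ k → 0 < f l)
    {l : ℕ} (hil : i ≤ l) (hlk : l < k) (hdec : f (l + 1) ≤ f l) :
    ∀ u, l ≤ u → u < k → f (u + 1) ≤ f u := by
  intro u hu
  induction u, hu using Nat.le_induction with
  | base => intro _; exact hdec
  | succ u hu ih =>
    intro huk
    have h1 : f (u + 1) ≤ f u := ih (by omega)
    have h2 := hlc (u + 1) (by omega) (by omega)
    simp only [Nat.add_sub_cancel] at h2
    have hfu : 0 < f u := hpos u (by omega) (by omega)
    have hfu1 : 0 < f (u + 1) := hpos (u + 1) (by omega) (by omega)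
    nlinarith

lemma logconcave_min {m : ℕ} (f : ℕ → ℝ)
    (hlc : ∀ n, 1 ≤ n → n + 1 ≤ m → f (n + 1) * f (n - 1) ≤ f n ^ 2)
    {i j k : ℕ} (hij : i ≤ j) (hjk : j ≤ k) (hk : k ≤ m)
    (hpos : ∀ l, i ≤ l → l ≤ k → 0 < f l) :
    min (f i) (f k) ≤ f j := by
  by_cases hex : ∃ l, i ≤ l ∧ l < j ∧ f (l + 1) ≤ f l
  · obtain ⟨l, hil, hlj, hd⟩ := hex
    have hdesc := logconcave_dec f hlc hk hpos hil (by omega) hd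
    -- f is nonincreasing from l to k; so f k ≤ f j
    have chain : ∀ t, j + t ≤ k → f (j + t) ≤ f j := by
      intro t
      induction t with
      | zero => intro _; simp
      | succ t ih =>
        intro ht
        have := hdesc (j + t) (by omega) (by omega)
        have := ih (by omega)
        calc f (j + (t+1)) = f ((j + t) + 1) := by ring_nf
          _ ≤ f (j + t) := hdesc (j + t) (by omega) (by omega)
          _ ≤ f j := ih (by omega)
    have : f k ≤ f j := by
      have := chain (k - j) (by omega)
      rwa [Nat.add_sub_cancel' hjk] at this
    exact le_trans (min_le_right _ _) this
  · push_neg at hex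
    -- f strictly increasing on [i, j), so f i ≤ f j
    have chain : ∀ t, i + t ≤ j → f i ≤ f (i + t) := by
      intro t
      induction t with
      | zero => intro _; simp
      | succ t ih =>
        intro ht
        have h1 := ih (by omega)
        have h2 := hex (i + t) (by omega) (by omega)
        calc f i ≤ f (i + t) := h1
          _ ≤ f ((i + t) + 1) := le_of_lt h2
          _ = f (i + (t + 1)) := by ring_nf
    have : f i ≤ f j := by
      have := chain (j - i) (by omega)
      rwa [Nat.add_sub_cancel' hij] at this
    exact le_trans (min_le_left _ _) this

lemma IsLogConcaveSeq.min_le {m : ℕ} {p : Fin (m + 1) → ℝ} (hp : IsLogConcaveSeq p)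
    {i j k : Fin (m + 1)} (hij : i ≤ j) (hjk : j ≤ k) (hi : 0 < p i) (hk : 0 < p k) :
    min (p i) (p k) ≤ p j := by
  set f : ℕ → ℝ := fun n => p ⟨n % (m + 1), Nat.mod_lt _ m.succ_pos⟩ with hfdef
  have hf : ∀ n (h : n < m + 1), f n = p ⟨n, h⟩ := by
    intro n h
    simp only [hfdef]
    congr 1
    exact Fin.ext (Nat.mod_eq_of_lt h)
  have hlc' : ∀ n, 1 ≤ n → n + 1 ≤ m → f (n + 1) * f (n - 1) ≤ f n ^ 2 := by
    intro n h1 h2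
    rw [hf (n + 1) (by omega), hf (n - 1) (by omega), hf n (by omega)]
    exact hp.2.2 n h1 h2
  have hik : (i : ℕ) ≤ k := le_trans hij hjk
  have hpos : ∀ l, (i : ℕ) ≤ l → l ≤ (k : ℕ) → 0 < f l := by
    intro l hl1 hl2
    rw [hf l (by omega)]
    exact hp.2.1 i ⟨l, by omega⟩ k (by rw [Fin.le_def]; exact hl1)
      (by rw [Fin.le_def]; exact hl2) hi hk
  have := logconcave_min f hlc' (i := i) (j := j) (k := k) hij hjk (by omega) hpos
  rwa [hf i i.isLt, hf j j.isLt, hf k k.isLt] at this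

lemma isClosed_logconcave {m : ℕ} : IsClosed {p : Fin (m + 1) → ℝ | IsLogConcaveSeq p} := by
  apply IsSeqClosed.isClosed
  intro x p hx hlim
  have htn : ∀ n, Filter.Tendsto (fun t => x t n) Filter.atTop (nhds (p n)) :=
    tendsto_pi_nhds.mp hlim
  have hnn : ∀ n, 0 ≤ p n := fun n => ge_of_tendsto' (htn n) (fun t => (hx t).1 n)
  refine ⟨hnn, ?_, ?_⟩
  · intro i j k hij hjk hi hk
    set c := min (p i) (p k) with hc
    have hc0 : 0 < c := lt_min hi hk
    have h1 : ∀ᶠ t in Filter.atTop, c / 2 < x t i :=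
      (htn i).eventually (eventually_gt_nhds (by
        calc c / 2 < c := by linarith
          _ ≤ p i := min_le_left _ _))
    have h2 : ∀ᶠ t in Filter.atTop, c / 2 < x t k :=
      (htn k).eventually (eventually_gt_nhds (by
        calc c / 2 < c := by linarith
          _ ≤ p k := min_le_right _ _))
    have h3 : ∀ᶠ t in Filter.atTop, c / 2 ≤ x t j := by
      filter_upwards [h1, h2] with t ht1 ht2
      have := (hx t).min_le hij hjk (lt_trans (by linarith) ht1) (lt_trans (by linarith) ht2)
      have hmin : c / 2 ≤ min (x t i) (x t k) := le_min (le_of_lt ht1) (le_of_lt ht2)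
      linarith
    have : c / 2 ≤ p j := ge_of_tendsto (htn j) h3
    linarith
  · intro n h1 h2
    exact le_of_tendsto_of_tendsto' ((htn _).mul (htn _)) ((htn _).pow 2)
      (fun t => (hx t).2.2 n h1 h2)

lemma isClosed_polytopeP (m d : ℕ) (v : Fin d → Fin (m + 1) → ℝ) (a : Fin d → ℝ) :
    IsClosed (polytopeP m d v a) := by
  have h1 : IsClosed {p : Fin (m + 1) → ℝ | ∀ n, 0 ≤ p n} := by
    rw [Set.setOf_forall]
    exact isClosed_iInter fun n => isClosed_le continuous_const (continuous_apply n)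
  have h2 : IsClosed {p : Fin (m + 1) → ℝ | ∀ i, ∑ n, p n * v i n = a i} := by
    rw [Set.setOf_forall]
    exact isClosed_iInter fun i => isClosed_eq
      (continuous_finset_sum _ fun n _ => (continuous_apply n).mul continuous_const)
      continuous_const
  exact h1.inter h2

/-- The supremum of a convex continuous functional `Φ` over
`L_I ∩ P_d(a, v)` (assumed nonempty, with `P_d(a, v)` bounded) is attained at some sequence
having at most `d` degrees of freedom, i.e. not having `d + 1` degrees of freedom. -/
theorem convex_max_attained_at_low_dof
    {m d : ℕ} (v : Fin d → Fin (m + 1) → ℝ) (a : Fin d → ℝ)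
    (hbdd : Bornology.IsBounded (polytopeP m d v a))
    (hne : ({p | IsLogConcaveSeq p} ∩ polytopeP m d v a).Nonempty)
    (Φ : (Fin (m + 1) → ℝ) → ℝ)
    (hΦcont : Continuous Φ) (hΦconv : ConvexOn ℝ Set.univ Φ) :
    ∃ p ∈ {p | IsLogConcaveSeq p} ∩ polytopeP m d v a,
      ¬ HasDegreesOfFreedom p (d + 1) ∧
      ∀ q ∈ {p | IsLogConcaveSeq p} ∩ polytopeP m d v a, Φ q ≤ Φ p := by
  set K := {p : Fin (m + 1) → ℝ | IsLogConcaveSeq p} ∩ polytopeP m d v a with hKdef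
  have hKclosed : IsClosed K := isClosed_logconcave.inter (isClosed_polytopeP m d v a)
  have hKbdd : Bornology.IsBounded K := hbdd.subset Set.inter_subset_right
  have hKcpt : IsCompact K := Metric.isCompact_of_isClosed_isBounded hKclosed hKbdd
  obtain ⟨p₀, hp₀K, hp₀max⟩ := hKcpt.exists_isMaxOn hne hΦcont.continuousOn
  set S := K ∩ {x | Φ x = Φ p₀} with hSdef
  have hSne : S.Nonempty := ⟨p₀, hp₀K, rfl⟩
  have hScpt : IsCompact S := hKcpt.inter_right (isClosed_eq hΦcont continuous_const)
  set F : (Fin (m + 1) → ℝ) → ℝ := fun x => ∑ n, x n ^ 2 with hFdef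
  have hFcont : Continuous F := continuous_finset_sum _ fun n _ => (continuous_apply n).pow 2
  obtain ⟨p, hpS, hpmax⟩ := hScpt.exists_isMaxOn hSne hFcont.continuousOn
  obtain ⟨hpK, hpΦ⟩ := hpS
  refine ⟨p, hpK, ?_, fun q hq => (hp₀max hq).trans_eq hpΦ.symm⟩
  rintro ⟨q, ε, hε, hli, hsupp, hpert⟩
  -- the linear constraint map on perturbation coefficients
  set M : Matrix (Fin d) (Fin (d + 1)) ℝ := fun i j => ∑ n, q j n * v i n with hMdef
  have hker : LinearMap.ker M.mulVecLin ≠ ⊥ := by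
    intro h
    have hinj : Function.Injective M.mulVecLin := LinearMap.ker_eq_bot.mp h
    have := LinearMap.finrank_le_finrank_of_injective hinj
    simp [Module.finrank_fintype_fun_eq_card] at this
  obtain ⟨δ₀, hδ₀ker, hδ₀ne⟩ := (Submodule.ne_bot_iff _).mp hker
  set c : ℝ := ε / (2 * (‖δ₀‖ + 1)) with hcdef
  have hnorm0 : 0 ≤ ‖δ₀‖ := norm_nonneg _
  have hc : 0 < c := div_pos hε (by linarith)
  set δ : Fin (d + 1) → ℝ := c • δ₀ with hδdef
  have hδbound : ∀ i, |δ i| < ε := by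
    intro i
    have h1 : |δ₀ i| ≤ ‖δ₀‖ := by
      have := norm_le_pi_norm δ₀ i; rwa [Real.norm_eq_abs] at this
    have h2 : c * (‖δ₀‖ + 1) = ε / 2 := by
      rw [hcdef, div_mul_eq_mul_div, div_eq_div_iff (by positivity) (by norm_num)]
      ring
    have : |δ i| = c * |δ₀ i| := by
      simp [hδdef, abs_mul, abs_of_pos hc]
    rw [this]
    nlinarith
  have hδker : δ ∈ LinearMap.ker M.mulVecLin := Submodule.smul_mem _ c hδ₀ker
  have hδne : δ ≠ 0 := smul_ne_zero (ne_of_gt hc) hδ₀ne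
  set w : Fin (m + 1) → ℝ := fun n => ∑ j, δ j * q j n with hwdef
  have hw0 : w ≠ 0 := by
    intro h
    apply hδne
    have hsum : ∑ j, δ j • q j = 0 := by
      funext n
      have := congrFun h n
      simpa [hwdef, Finset.sum_apply] using this
    funext j
    exact Fintype.linearIndependent_iff.mp hli δ hsum j
  have hTw : ∀ i, ∑ n, w n * v i n = 0 := by
    intro i
    have h0 : M.mulVecLin δ = 0 := hδker
    have h1 : M.mulVec δ i = 0 := by rw [show M.mulVec δ = M.mulVecLin δ from rfl, h0]; rfl
    calc ∑ n, w n * v i n = ∑ n, ∑ j, δ j * q j n * v i n := by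
          simp [hwdef, Finset.sum_mul]
      _ = ∑ j, ∑ n, δ j * q j n * v i n := Finset.sum_comm
      _ = ∑ j, M i j * δ j := by
          refine Finset.sum_congr rfl fun j _ => ?_
          simp [hMdef, Finset.mul_sum, Finset.sum_mul]
          exact Finset.sum_congr rfl fun n _ => by ring
      _ = M.mulVec δ i := by simp [Matrix.mulVec, dotProduct]
      _ = 0 := h1
  -- the two perturbed points
  set x : Fin (m + 1) → ℝ := fun n => p n + w n with hxdef
  set y : Fin (m + 1) → ℝ := fun n => p n - w n with hydef
  have hxlc : IsLogConcaveSeq x := hpert δ hδbound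
  have hylc : IsLogConcaveSeq y := by
    have := hpert (-δ) (fun i => by simpa using hδbound i)
    convert this using 1
    funext n
    simp [hydef, hwdef, sub_eq_add_neg, Finset.sum_neg_distrib]
  have hconstr : ∀ (z : Fin (m + 1) → ℝ), (∀ i0, ∑ n, z n * v i0 n = 0) →
      (∀ i0, ∑ n, (p n + z n) * v i0 n = a i0) := by
    intro z hz i0
    have hp2 := hpK.2.2 i0
    calc ∑ n, (p n + z n) * v i0 n = ∑ n, (p n * v i0 n + z n * v i0 n) := by
          refine Finset.sum_congr rfl fun n _ => by ring
      _ = (∑ n, p n * v i0 n) + ∑ n, z n * v i0 n := Finset.sum_add_distrib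
      _ = a i0 := by rw [hp2, hz i0, add_zero]
  have hxK : x ∈ K := ⟨hxlc, hxlc.1, hconstr w hTw⟩
  have hyK : y ∈ K := by
    refine ⟨hylc, hylc.1, ?_⟩
    have := hconstr (fun n => -w n) (fun i0 => by
      simp only [neg_mul, Finset.sum_neg_distrib, hTw i0, neg_zero])
    intro i0
    have h := this i0
    convert h using 2
    simp only [hydef, sub_eq_add_neg]
  -- convexity forces x, y to be maximizers of Φ too
  have hmid : p = (1/2 : ℝ) • x + (1/2 : ℝ) • y := by
    funext n; simp [hxdef, hydef]; ring
  have hconv := hΦconv.2 (Set.mem_univ x) (Set.mem_univ y)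
    (by norm_num : (0:ℝ) ≤ 1/2) (by norm_num : (0:ℝ) ≤ 1/2) (by norm_num)
  rw [← hmid] at hconv
  simp only [smul_eq_mul] at hconv
  have hΦx : Φ x ≤ Φ p₀ := hp₀max hxK
  have hΦy : Φ y ≤ Φ p₀ := hp₀max hyK
  have hΦxe : Φ x = Φ p₀ := by rw [hpΦ] at hconv; linarith
  have hΦye : Φ y = Φ p₀ := by rw [hpΦ] at hconv; linarith
  have hxS : x ∈ S := ⟨hxK, hΦxe⟩
  have hyS : y ∈ S := ⟨hyK, hΦye⟩
  -- but then the sum of squares increases strictly, contradiction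
  have hFx : F x ≤ F p := hpmax hxS
  have hFy : F y ≤ F p := hpmax hyS
  have hFsum : F x + F y = 2 * F p + 2 * F w := by
    simp only [hFdef, hxdef, hydef, ← Finset.sum_add_distrib, Finset.mul_sum]
    refine Finset.sum_congr rfl fun n _ => by ring
  have hFw : 0 < F w := by
    obtain ⟨n₀, hn₀⟩ := Function.ne_iff.mp hw0
    have h1 : 0 < w n₀ ^ 2 := lt_of_le_of_ne (sq_nonneg _) (Ne.symm (pow_ne_zero 2 hn₀))
    have h2 : ∀ n ∈ Finset.univ, 0 ≤ w n ^ 2 := fun n _ => sq_nonneg _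
    exact lt_of_lt_of_le h1 (Finset.single_le_sum h2 (Finset.mem_univ n₀))
  linarith
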